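/- Let A, Z, E1, E2 : Ω → ℝ be square-integrable, centered random variables on a probability space, pairwise uncorrelated (E[A·Z] = E[A·E1] = E[A·E2] = E[Z·E1] = E[Z·E2] = E[E1·E2] = 0), with Var(A) > 0, Var(A) + Var(Z) > 0, Var(A) + Var(E1) > 0, and Var(A) + Var(E1) + Var(E2) > 0. Define ŷ = A + Z, rδ = A + E1, and rΔ = A + E1 + E2. Then the Pearson correlations satisfy exactly Corr(ŷ, rΔ) = Corr(ŷ, rδ) · Corr(rδ, rΔ). (This is the exact form of the paper's Corollary: the final predictive correlation equals the product of the proxy correlation and the label-alignment correlation when the signal component is common to proxy and target, i.e., α(δ) = α(Δ), and the noise is nested.) -/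

import Mathlib

open MeasureTheory

lemma int_mul_of_L2 {Ω : Type*} [MeasurableSpace Ω] {μ : Measure Ω}
    {f g : Ω → ℝ} (hf : MemLp f 2 μ) (hg : MemLp g 2 μ) :
    Integrable (fun ω => f ω * g ω) μ := by
  have h := hg.smul (p := 2) (q := 2) (r := 1) hf
  rw [memLp_one_iff_integrable] at h
  simpa [smul_eq_mul, Pi.mul_def] using h

lemma int_expand3x3 {Ω : Type*} [MeasurableSpace Ω] (μ : Measure Ω)
    (f1 f2 f3 g1 g2 g3 : Ω → ℝ)
    (hf1 : MemLp f1 2 μ) (hf2 : MemLp f2 2 μ) (hf3 : MemLp f3 2 μ)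
    (hg1 : MemLp g1 2 μ) (hg2 : MemLp g2 2 μ) (hg3 : MemLp g3 2 μ) :
    ∫ ω, (f1 ω + f2 ω + f3 ω) * (g1 ω + g2 ω + g3 ω) ∂μ
      = (∫ ω, f1 ω * g1 ω ∂μ) + ((∫ ω, f1 ω * g2 ω ∂μ) + ((∫ ω, f1 ω * g3 ω ∂μ)
        + ((∫ ω, f2 ω * g1 ω ∂μ) + ((∫ ω, f2 ω * g2 ω ∂μ) + ((∫ ω, f2 ω * g3 ω ∂μ)
        + ((∫ ω, f3 ω * g1 ω ∂μ) + ((∫ ω, f3 ω * g2 ω ∂μ) + (∫ ω, f3 ω * g3 ω ∂μ)))))))) := by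
  have I11 := int_mul_of_L2 hf1 hg1
  have I12 := int_mul_of_L2 hf1 hg2
  have I13 := int_mul_of_L2 hf1 hg3
  have I21 := int_mul_of_L2 hf2 hg1
  have I22 := int_mul_of_L2 hf2 hg2
  have I23 := int_mul_of_L2 hf2 hg3
  have I31 := int_mul_of_L2 hf3 hg1
  have I32 := int_mul_of_L2 hf3 hg2
  have I33 := int_mul_of_L2 hf3 hg3
  have e : (fun ω => (f1 ω + f2 ω + f3 ω) * (g1 ω + g2 ω + g3 ω))
      = fun ω => f1 ω * g1 ω + (f1 ω * g2 ω + (f1 ω * g3 ω + (f2 ω * g1 ω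
        + (f2 ω * g2 ω + (f2 ω * g3 ω + (f3 ω * g1 ω + (f3 ω * g2 ω + f3 ω * g3 ω))))))) :=
    funext fun ω => by ring
  rw [show (∫ ω, (f1 ω + f2 ω + f3 ω) * (g1 ω + g2 ω + g3 ω) ∂μ)
      = ∫ ω, f1 ω * g1 ω + (f1 ω * g2 ω + (f1 ω * g3 ω + (f2 ω * g1 ω
        + (f2 ω * g2 ω + (f2 ω * g3 ω + (f3 ω * g1 ω + (f3 ω * g2 ω + f3 ω * g3 ω))))))) ∂μ
      from by rw [show (fun ω => (f1 ω + f2 ω + f3 ω) * (g1 ω + g2 ω + g3 ω)) = _ from e]]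
  have J8 : Integrable (fun ω => f3 ω * g2 ω + f3 ω * g3 ω) μ := I32.add I33
  have J7 : Integrable (fun ω => f3 ω * g1 ω + (f3 ω * g2 ω + f3 ω * g3 ω)) μ := I31.add J8
  have J6 : Integrable (fun ω => f2 ω * g3 ω + (f3 ω * g1 ω + (f3 ω * g2 ω + f3 ω * g3 ω))) μ :=
    I23.add J7
  have J5 : Integrable (fun ω => f2 ω * g2 ω + (f2 ω * g3 ω + (f3 ω * g1 ω
      + (f3 ω * g2 ω + f3 ω * g3 ω)))) μ := I22.add J6
  have J4 : Integrable (fun ω => f2 ω * g1 ω + (f2 ω * g2 ω + (f2 ω * g3 ω + (f3 ω * g1 ω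
      + (f3 ω * g2 ω + f3 ω * g3 ω))))) μ := I21.add J5
  have J3 : Integrable (fun ω => f1 ω * g3 ω + (f2 ω * g1 ω + (f2 ω * g2 ω + (f2 ω * g3 ω
      + (f3 ω * g1 ω + (f3 ω * g2 ω + f3 ω * g3 ω)))))) μ := I13.add J4
  have J2 : Integrable (fun ω => f1 ω * g2 ω + (f1 ω * g3 ω + (f2 ω * g1 ω + (f2 ω * g2 ω
      + (f2 ω * g3 ω + (f3 ω * g1 ω + (f3 ω * g2 ω + f3 ω * g3 ω))))))) μ := I12.add J3
  rw [integral_add I11 J2, integral_add I12 J3, integral_add I13 J4, integral_add I21 J5,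
    integral_add I22 J6, integral_add I23 J7, integral_add I31 J8, integral_add I32 I33]

/-- For centered, square-integrable, pairwise-uncorrelated `A, Z, E1, E2`
with the indicated positive variances, setting `ŷ = A + Z`, `rδ = A + E1`,
`rΔ = A + E1 + E2`, the Pearson correlations satisfy exactly
`Corr(ŷ, rΔ) = Corr(ŷ, rδ) · Corr(rδ, rΔ)`. -/
theorem corr_factorization_nested_noise
    {Ω : Type*} [MeasurableSpace Ω] (μ : Measure Ω) [IsProbabilityMeasure μ]
    (A Z E1 E2 : Ω → ℝ)
    (hA : MemLp A 2 μ) (hZ : MemLp Z 2 μ) (hE1 : MemLp E1 2 μ) (hE2 : MemLp E2 2 μ)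
    (hA0 : ∫ ω, A ω ∂μ = 0) (hZ0 : ∫ ω, Z ω ∂μ = 0)
    (hE10 : ∫ ω, E1 ω ∂μ = 0) (hE20 : ∫ ω, E2 ω ∂μ = 0)
    (hAZ : ∫ ω, A ω * Z ω ∂μ = 0)
    (hAE1 : ∫ ω, A ω * E1 ω ∂μ = 0)
    (hAE2 : ∫ ω, A ω * E2 ω ∂μ = 0)
    (hZE1 : ∫ ω, Z ω * E1 ω ∂μ = 0)
    (hZE2 : ∫ ω, Z ω * E2 ω ∂μ = 0)
    (hE1E2 : ∫ ω, E1 ω * E2 ω ∂μ = 0)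
    (hVarA : 0 < ∫ ω, A ω ^ 2 ∂μ)
    (hVarAZ : 0 < (∫ ω, A ω ^ 2 ∂μ) + ∫ ω, Z ω ^ 2 ∂μ)
    (hVarAE1 : 0 < (∫ ω, A ω ^ 2 ∂μ) + ∫ ω, E1 ω ^ 2 ∂μ)
    (hVarAE1E2 : 0 < (∫ ω, A ω ^ 2 ∂μ) + (∫ ω, E1 ω ^ 2 ∂μ) + ∫ ω, E2 ω ^ 2 ∂μ) :
    (∫ ω, (A ω + Z ω) * (A ω + E1 ω + E2 ω) ∂μ)
        / (Real.sqrt (∫ ω, (A ω + Z ω) ^ 2 ∂μ)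
           * Real.sqrt (∫ ω, (A ω + E1 ω + E2 ω) ^ 2 ∂μ))
      = ((∫ ω, (A ω + Z ω) * (A ω + E1 ω) ∂μ)
          / (Real.sqrt (∫ ω, (A ω + Z ω) ^ 2 ∂μ)
             * Real.sqrt (∫ ω, (A ω + E1 ω) ^ 2 ∂μ)))
        * ((∫ ω, (A ω + E1 ω) * (A ω + E1 ω + E2 ω) ∂μ)
          / (Real.sqrt (∫ ω, (A ω + E1 ω) ^ 2 ∂μ)
             * Real.sqrt (∫ ω, (A ω + E1 ω + E2 ω) ^ 2 ∂μ))) := by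
  have h0 : MemLp (fun _ : Ω => (0 : ℝ)) 2 μ := memLp_const 0
  -- symmetric cross terms
  have hZA : ∫ ω, Z ω * A ω ∂μ = 0 := by
    rw [show (fun ω => Z ω * A ω) = fun ω => A ω * Z ω from funext fun ω => mul_comm _ _]; exact hAZ
  have hE1A : ∫ ω, E1 ω * A ω ∂μ = 0 := by
    rw [show (fun ω => E1 ω * A ω) = fun ω => A ω * E1 ω from funext fun ω => mul_comm _ _]; exact hAE1
  have hE2A : ∫ ω, E2 ω * A ω ∂μ = 0 := by
    rw [show (fun ω => E2 ω * A ω) = fun ω => A ω * E2 ω from funext fun ω => mul_comm _ _]; exact hAE2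
  have hE1Z : ∫ ω, E1 ω * Z ω ∂μ = 0 := by
    rw [show (fun ω => E1 ω * Z ω) = fun ω => Z ω * E1 ω from funext fun ω => mul_comm _ _]; exact hZE1
  have hE2E1 : ∫ ω, E2 ω * E1 ω ∂μ = 0 := by
    rw [show (fun ω => E2 ω * E1 ω) = fun ω => E1 ω * E2 ω from funext fun ω => mul_comm _ _]; exact hE1E2
  have hAA : ∫ ω, A ω * A ω ∂μ = ∫ ω, A ω ^ 2 ∂μ := by
    simp_rw [pow_two]
  have hZZ : ∫ ω, Z ω * Z ω ∂μ = ∫ ω, Z ω ^ 2 ∂μ := by simp_rw [pow_two]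
  have hE1E1 : ∫ ω, E1 ω * E1 ω ∂μ = ∫ ω, E1 ω ^ 2 ∂μ := by simp_rw [pow_two]
  have hE2E2 : ∫ ω, E2 ω * E2 ω ∂μ = ∫ ω, E2 ω ^ 2 ∂μ := by simp_rw [pow_two]
  set a := ∫ ω, A ω ^ 2 ∂μ
  set z := ∫ ω, Z ω ^ 2 ∂μ
  set e1 := ∫ ω, E1 ω ^ 2 ∂μ
  set e2 := ∫ ω, E2 ω ^ 2 ∂μ
  -- the six integrals
  have h1 : ∫ ω, (A ω + Z ω) * (A ω + E1 ω + E2 ω) ∂μ = a := by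
    have := int_expand3x3 μ A Z (fun _ => 0) A E1 E2 hA hZ h0 hA hE1 hE2
    simpa [hAA, hAE1, hAE2, hZA, hZE1, hZE2] using this
  have h2 : ∫ ω, (A ω + Z ω) ^ 2 ∂μ = a + z := by
    have := int_expand3x3 μ A Z (fun _ => 0) A Z (fun _ => 0) hA hZ h0 hA hZ h0
    simp_rw [pow_two]
    simpa [hAA, hAZ, hZA, hZZ] using this
  have h3 : ∫ ω, (A ω + E1 ω + E2 ω) ^ 2 ∂μ = a + e1 + e2 := by
    have := int_expand3x3 μ A E1 E2 A E1 E2 hA hE1 hE2 hA hE1 hE2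
    simp_rw [pow_two]
    rw [this]
    rw [hAA, hAE1, hAE2, hE1A, hE1E1, hE1E2, hE2A, hE2E1, hE2E2]
    ring
  have h4 : ∫ ω, (A ω + Z ω) * (A ω + E1 ω) ∂μ = a := by
    have := int_expand3x3 μ A Z (fun _ => 0) A E1 (fun _ => 0) hA hZ h0 hA hE1 h0
    simpa [hAA, hAE1, hZA, hZE1] using this
  have h5 : ∫ ω, (A ω + E1 ω) ^ 2 ∂μ = a + e1 := by
    have := int_expand3x3 μ A E1 (fun _ => 0) A E1 (fun _ => 0) hA hE1 h0 hA hE1 h0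
    simp_rw [pow_two]
    simpa [hAA, hAE1, hE1A, hE1E1] using this
  have h6 : ∫ ω, (A ω + E1 ω) * (A ω + E1 ω + E2 ω) ∂μ = a + e1 := by
    have := int_expand3x3 μ A E1 (fun _ => 0) A E1 E2 hA hE1 h0 hA hE1 hE2
    simpa [hAA, hAE1, hAE2, hE1A, hE1E1, hE1E2] using this
  rw [h1, h2, h3, h4, h5, h6]
  have s1 : (0:ℝ) < Real.sqrt (a + z) := Real.sqrt_pos.mpr hVarAZ
  have s2 : (0:ℝ) < Real.sqrt (a + e1) := Real.sqrt_pos.mpr hVarAE1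
  have s3 : (0:ℝ) < Real.sqrt (a + e1 + e2) := Real.sqrt_pos.mpr hVarAE1E2
  have hs2 : Real.sqrt (a + e1) * Real.sqrt (a + e1) = a + e1 :=
    Real.mul_self_sqrt hVarAE1.le
  rw [div_mul_div_comm]
  have hden : Real.sqrt (a + z) * Real.sqrt (a + e1)
      * (Real.sqrt (a + e1) * Real.sqrt (a + e1 + e2))
      = Real.sqrt (a + z) * Real.sqrt (a + e1 + e2) * (a + e1) := by
    rw [show Real.sqrt (a + z) * Real.sqrt (a + e1)
        * (Real.sqrt (a + e1) * Real.sqrt (a + e1 + e2))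
        = Real.sqrt (a + z) * Real.sqrt (a + e1 + e2)
          * (Real.sqrt (a + e1) * Real.sqrt (a + e1)) from by ring, hs2]
  rw [hden, mul_div_mul_right _ _ (ne_of_gt hVarAE1)]
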